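/- Let m ∈ (0,1), ρ > e, φ(t) = ρ^{-t}·t^{m(t+1/2)}·e^{-mt}, and suppose t_ρ ≥ 1/2 satisfies ln t_ρ + 1/(2 t_ρ) = (1/m) ln ρ. Then φ(t_ρ) = √ρ · exp(-m(t_ρ + 1/2 + 1/(4 t_ρ))), and consequently √ρ · e^{-m/2} · e^{-m ρ^{1/m}} < φ(t_ρ) < √ρ · e^{-m ρ^{1/m}}. -/
import Mathlib


open Real

lemma exp_lt_one_add_add_sq {x : ℝ} (hx0 : 0 < x) (hx1 : x ≤ 1) :
    Real.exp x < 1 + x + x ^ 2 := by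
  have hb := Real.exp_bound (x := x) (by rw [abs_of_pos hx0]; exact hx1) (by norm_num : 0 < 2)
  have h2 : |Real.exp x - (1 + x)| ≤ x ^ 2 * (3 / (2 * 2)) := by
    simpa [Finset.sum_range_succ] using hb
  have := abs_le.1 h2
  nlinarith [sq_nonneg x, this.1, this.2]

theorem stmt_8 (m ρ : ℝ) (hm : m ∈ Set.Ioo (0 : ℝ) 1) (hρ : Real.exp 1 < ρ)
    (φ : ℝ → ℝ)
    (hφ : φ = fun t : ℝ => ρ ^ (-t) * t ^ (m * (t + 1 / 2)) * Real.exp (-m * t))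
    (tρ : ℝ) (htρ : 1 / 2 ≤ tρ)
    (hcrit : Real.log tρ + 1 / (2 * tρ) = (1 / m) * Real.log ρ) :
    φ tρ = Real.sqrt ρ * Real.exp (-m * (tρ + 1 / 2 + 1 / (4 * tρ))) ∧
    Real.sqrt ρ * Real.exp (-m / 2) * Real.exp (-m * ρ ^ (1 / m : ℝ)) < φ tρ ∧
    φ tρ < Real.sqrt ρ * Real.exp (-m * ρ ^ (1 / m : ℝ)) := by
  obtain ⟨hm0, hm1⟩ := hm
  have ht0 : (0 : ℝ) < tρ := lt_of_lt_of_le (by norm_num) htρ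
  have htne : tρ ≠ 0 := ne_of_gt ht0
  have hmne : m ≠ 0 := ne_of_gt hm0
  have hρ0 : (0 : ℝ) < ρ := lt_trans (Real.exp_pos 1) hρ
  have hlt : Real.log tρ = (1 / m) * Real.log ρ - 1 / (2 * tρ) := by linarith
  have hsqrt : Real.sqrt ρ = Real.exp (Real.log ρ * (1 / 2)) := by
    rw [Real.sqrt_eq_rpow, Real.rpow_def_of_pos hρ0]
  have hkey : ρ ^ (1 / m : ℝ) = tρ * Real.exp (1 / (2 * tρ)) := by
    rw [Real.rpow_def_of_pos hρ0, mul_comm, ← hcrit, Real.exp_add, Real.exp_log ht0]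
  have hx1 : 1 / (2 * tρ) ≤ 1 := by
    rw [div_le_one (by linarith)]; linarith
  have hx0 : 0 < 1 / (2 * tρ) := by positivity
  have h12 : (1 : ℝ) / 2 = tρ * (1 / (2 * tρ)) := by field_simp
  have h14 : 1 / (4 * tρ) = tρ * (1 / (2 * tρ)) ^ 2 := by field_simp; ring
  have h1 : φ tρ = Real.sqrt ρ * Real.exp (-m * (tρ + 1 / 2 + 1 / (4 * tρ))) := by
    rw [hφ]
    simp only
    rw [Real.rpow_def_of_pos hρ0, Real.rpow_def_of_pos ht0, hsqrt,
      ← Real.exp_add, ← Real.exp_add, ← Real.exp_add]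
    congr 1
    rw [hlt]
    field_simp
    ring
  refine ⟨h1, ?_, ?_⟩
  · -- lower bound
    rw [h1, hsqrt, hkey]
    simp only [← Real.exp_add]
    rw [Real.exp_lt_exp]
    have hx : 1 + (1 / (2 * tρ)) < Real.exp (1 / (2 * tρ)) := by
      have := Real.add_one_lt_exp (x := 1 / (2 * tρ)) (ne_of_gt hx0)
      linarith
    have hge : 1 + (1 / (2 * tρ)) ^ 2 < Real.exp (1 / (2 * tρ)) := by nlinarith
    have key : tρ * (1 + (1 / (2 * tρ)) ^ 2) < tρ * Real.exp (1 / (2 * tρ)) :=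
      (mul_lt_mul_iff_right₀ ht0).2 hge
    nlinarith [mul_lt_mul_of_pos_left key hm0]
  · -- upper bound
    rw [h1, hsqrt, hkey]
    simp only [← Real.exp_add]
    rw [Real.exp_lt_exp]
    have hlt2 : Real.exp (1 / (2 * tρ)) < 1 + (1 / (2 * tρ)) + (1 / (2 * tρ)) ^ 2 :=
      exp_lt_one_add_add_sq hx0 hx1
    have key : tρ * Real.exp (1 / (2 * tρ)) < tρ * (1 + (1 / (2 * tρ)) + (1 / (2 * tρ)) ^ 2) :=
      (mul_lt_mul_iff_right₀ ht0).2 hlt2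
    nlinarith [mul_lt_mul_of_pos_left key hm0]
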